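/- Let y : [T, T⁺] → [0,∞) be absolutely continuous and χ ∈ L¹(T,T⁺) nonnegative. Suppose 1 < γ ≤ 2 and y'(t) ≤ χ(t)(y(t) + y(t)^{2/γ}) for a.e. t ∈ (T, T⁺). If exp(2∫_T^{T⁺} χ(s) ds) · y(T) ≤ 1, then for all τ ∈ (T, T⁺], y(τ) ≤ exp(2∫_T^τ χ(s) ds) · y(T). -/

import Mathlib

open MeasureTheory

open Set intervalIntegral in
lemma gronwall_forecast_aux
    (T Tp : ℝ) (hTT : T ≤ Tp)
    (y y' χ : ℝ → ℝ)
    (hynn : ∀ t ∈ Set.Icc T Tp, 0 ≤ y t)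
    (hχint : IntegrableOn χ (Set.Ioc T Tp))
    (hχnn : ∀ t, 0 ≤ χ t)
    (hy'int : IntegrableOn y' (Set.Icc T Tp))
    (hAC : ∀ t ∈ Set.Icc T Tp, y t = y T + ∫ s in T..t, y' s)
    (b : ℝ) (hbT : T ≤ b) (hbTp : b ≤ Tp)
    (hbd : ∀ᵐ t ∂(volume.restrict (Set.Ioo T b)), y' t ≤ 2 * χ t * y t) :
    ∀ τ ∈ Set.Icc T b, y τ ≤ Real.exp (2 * ∫ s in T..τ, χ s) * y T := by
  set J : ℝ → ℝ := fun t => ∫ s in T..t, χ s with hJdef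
  -- basic integrability facts
  have hχicc : IntegrableOn χ (Set.Icc T Tp) :=
    (integrableOn_Icc_iff_integrableOn_Ioc).mpr hχint
  have hii : ∀ (f : ℝ → ℝ), IntegrableOn f (Set.Icc T Tp) →
      ∀ s ∈ Set.Icc T Tp, ∀ t ∈ Set.Icc T Tp, IntervalIntegrable f volume s t := by
    intro f hf s hs t ht
    rw [intervalIntegrable_iff]
    refine hf.mono_set (fun x hx => ?_)
    exact ⟨le_trans (le_min hs.1 ht.1) hx.1.le, le_trans hx.2 (max_le hs.2 ht.2)⟩
  -- continuity of y and J
  have ycont : ContinuousOn y (Set.Icc T Tp) := by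
    have h1 : ContinuousOn (fun t => y T + ∫ s in T..t, y' s) (Set.Icc T Tp) := by
      apply ContinuousOn.add continuousOn_const
      have := continuousOn_primitive_interval (f := y') (μ := volume) (a := T) (b := Tp) ?_
      · rwa [Set.uIcc_of_le hTT] at this
      · rwa [Set.uIcc_of_le hTT]
    exact ContinuousOn.congr h1 hAC
  have Jcont : ContinuousOn J (Set.Icc T Tp) := by
    have := continuousOn_primitive_interval (f := χ) (μ := volume) (a := T) (b := Tp) ?_
    · rwa [Set.uIcc_of_le hTT] at this
    · rwa [Set.uIcc_of_le hTT]
  have hJT : J T = 0 := integral_same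
  have hJadd : ∀ s ∈ Set.Icc T Tp, ∀ t ∈ Set.Icc T Tp,
      J t - J s = ∫ x in s..t, χ x := by
    intro s hs t ht
    have := integral_add_adjacent_intervals
      (hii χ hχicc T ⟨le_rfl, hTT⟩ s hs) (hii χ hχicc s hs t ht)
    simp only [hJdef]
    linarith [this]
  have hJmono : ∀ s ∈ Set.Icc T Tp, ∀ t ∈ Set.Icc T Tp, s ≤ t → J s ≤ J t := by
    intro s hs t ht hst
    have h1 := hJadd s hs t ht
    have h2 : (0:ℝ) ≤ ∫ x in s..t, χ x :=
      intervalIntegral.integral_nonneg hst (fun u _ => hχnn u)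
    linarith
  have hJnn : ∀ t ∈ Set.Icc T Tp, 0 ≤ J t := by
    intro t ht
    have := hJmono T ⟨le_rfl, hTT⟩ t ht ht.1
    linarith [hJT]
  have hyrep : ∀ s ∈ Set.Icc T Tp, ∀ t ∈ Set.Icc T Tp,
      y t = y s + ∫ x in s..t, y' x := by
    intro s hs t ht
    have h1 := hAC s hs
    have h2 := hAC t ht
    have := integral_add_adjacent_intervals
      (hii y' hy'int T ⟨le_rfl, hTT⟩ s hs) (hii y' hy'int s hs t ht)
    linarith
  -- the step lemma
  have step : ∀ δ s₁ s₂ : ℝ, 0 < δ → δ < 1 → T ≤ s₁ → s₁ ≤ s₂ → s₂ ≤ b →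
      2 * (J s₂ - J s₁) ≤ δ → y s₂ ≤ y s₁ / (1 - δ) := by
    intro δ s₁ s₂ hδ0 hδ1 hT1 h12 h2b hJs
    have hs₁ : s₁ ∈ Set.Icc T Tp := ⟨hT1, le_trans (le_trans h12 h2b) hbTp⟩
    have hs₂ : s₂ ∈ Set.Icc T Tp := ⟨le_trans hT1 h12, le_trans h2b hbTp⟩
    set M : ℝ := sSup (y '' Set.Icc s₁ s₂) with hMdef
    have hcompact : IsCompact (Set.Icc s₁ s₂) := isCompact_Icc
    have hsub : Set.Icc s₁ s₂ ⊆ Set.Icc T Tp := fun x hx => ⟨le_trans hT1 hx.1, le_trans hx.2 hs₂.2⟩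
    have hbdd : BddAbove (y '' Set.Icc s₁ s₂) :=
      (hcompact.image_of_continuousOn (ycont.mono hsub)).bddAbove
    have hne : (y '' Set.Icc s₁ s₂).Nonempty := ⟨y s₁, ⟨s₁, ⟨le_rfl, h12⟩, rfl⟩⟩
    have hyM : ∀ x ∈ Set.Icc s₁ s₂, y x ≤ M := fun x hx => le_csSup hbdd ⟨x, hx, rfl⟩
    have hM0 : 0 ≤ M := le_trans (hynn s₁ hs₁) (hyM s₁ ⟨le_rfl, h12⟩)
    have key : ∀ t ∈ Set.Icc s₁ s₂, y t ≤ y s₁ + δ * M := by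
      intro t ht
      have hts : t ∈ Set.Icc T Tp := hsub ht
      have hrep := hyrep s₁ hs₁ t hts
      have hint1 : IntervalIntegrable y' volume s₁ t := hii y' hy'int s₁ hs₁ t hts
      have hint2 : IntervalIntegrable (fun x => 2 * M * χ x) volume s₁ t :=
        (hii χ hχicc s₁ hs₁ t hts).const_mul _
      have hae : y' ≤ᵐ[volume.restrict (Set.Icc s₁ t)] fun x => 2 * M * χ x := by
        have hcongr : volume.restrict (Set.Icc s₁ t) = volume.restrict (Set.Ioo s₁ t) :=
          (Measure.restrict_congr_set (Ioo_ae_eq_Icc)).symm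
        rw [hcongr]
        have hsub2 : Set.Ioo s₁ t ⊆ Set.Ioo T b := fun x hx =>
          ⟨lt_of_le_of_lt hT1 hx.1, lt_of_lt_of_le hx.2 (le_trans ht.2 h2b)⟩
        have h2 : ∀ᵐ x ∂volume.restrict (Set.Ioo s₁ t), y' x ≤ 2 * χ x * y x :=
          ae_restrict_of_ae_restrict_of_subset hsub2 hbd
        have h3 := ae_restrict_mem (μ := volume) (measurableSet_Ioo : MeasurableSet (Set.Ioo s₁ t))
        filter_upwards [h2, h3] with x hx1 hx2
        have hxM : y x ≤ M := hyM x ⟨hx2.1.le, le_trans hx2.2.le ht.2⟩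
        nlinarith [hχnn x]
      have hIle := intervalIntegral.integral_mono_ae_restrict ht.1 hint1 hint2 hae
      have hconst : ∫ x in s₁..t, 2 * M * χ x = 2 * M * ∫ x in s₁..t, χ x :=
        intervalIntegral.integral_const_mul _ _
      have hJt : ∫ x in s₁..t, χ x = J t - J s₁ := (hJadd s₁ hs₁ t hts).symm
      have hJle : J t ≤ J s₂ := hJmono t hts s₂ hs₂ ht.2
      have hJs₁t : (0:ℝ) ≤ J t - J s₁ := by
        have := hJmono s₁ hs₁ t hts ht.1; linarith
      have : ∫ x in s₁..t, y' x ≤ δ * M := by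
        rw [hconst, hJt] at hIle
        nlinarith
      linarith [hrep, this]
    have hMle : M ≤ y s₁ + δ * M := by
      apply csSup_le hne
      rintro m ⟨t, ht, rfl⟩
      exact key t ht
    have hMfin : M ≤ y s₁ / (1 - δ) := by
      rw [le_div_iff₀ (by linarith)]
      nlinarith
    exact le_trans (hyM s₂ ⟨h12, le_rfl⟩) hMfin
  -- main bound for fixed τ and δ
  intro τ hτ
  have hτp : τ ∈ Set.Icc T Tp := ⟨hτ.1, le_trans hτ.2 hbTp⟩
  set c : ℝ := 2 * J τ with hcdef
  have hc0 : 0 ≤ c := by have := hJnn τ hτp; positivity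
  have hyT0 : 0 ≤ y T := hynn T ⟨le_rfl, hTT⟩
  have hδbound : ∀ δ : ℝ, δ ∈ Set.Ioc (0:ℝ) (1/2) →
      y τ ≤ y T * Real.exp ((1 + 2*δ) * (c + δ)) := by
    intro δ hδ
    obtain ⟨hδ0, hδhalf⟩ := hδ
    have hδ1 : δ < 1 := by linarith
    -- induction
    have ind : ∀ n : ℕ, ∀ τ' ∈ Set.Icc T b, 2 * J τ' ≤ (n+1)*δ →
        y τ' ≤ y T / (1-δ)^(n+1) := by
      intro n
      induction n with
      | zero =>
        intro τ' hτ' hJτ'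
        have := step δ T τ' hδ0 hδ1 le_rfl hτ'.1 hτ'.2 (by rw [hJT]; push_cast at hJτ'; linarith)
        simpa [pow_one] using this
      | succ n ih =>
        intro τ' hτ' hJτ'
        have hτ'p : τ' ∈ Set.Icc T Tp := ⟨hτ'.1, le_trans hτ'.2 hbTp⟩
        have hpowpos : (0:ℝ) < (1-δ)^(n+1) := pow_pos (by linarith) _
        by_cases hcase : 2 * J τ' ≤ (n+1)*δ
        · have h1 := ih τ' hτ' hcase
          have h2 : y T / (1-δ)^(n+1) ≤ y T / (1-δ)^(n+1+1) := by
            apply div_le_div_of_nonneg_left hyT0 (pow_pos (by linarith) _)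
            exact pow_le_pow_of_le_one (by linarith) (by linarith) (by omega)
          exact le_trans h1 h2
        · push_neg at hcase
          have hmid : ((n:ℝ)+1)*δ/2 ∈ Set.Icc (J T) (J τ') := by
            rw [hJT]
            constructor
            · positivity
            · push_cast at hJτ' ⊢; linarith
          obtain ⟨s, hs, hJs⟩ := intermediate_value_Icc hτ'.1
            (Jcont.mono (fun x hx => ⟨hx.1, le_trans hx.2 hτ'p.2⟩)) hmid
          have hsb : s ∈ Set.Icc T b := ⟨hs.1, le_trans hs.2 hτ'.2⟩
          have h1 := ih s hsb (by rw [hJs]; ring_nf; push_cast; linarith)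
          have h2 := step δ s τ' hδ0 hδ1 hs.1 hs.2 hτ'.2
            (by rw [hJs]; push_cast at hJτ' ⊢; linarith)
          have h3 : y s / (1-δ) ≤ (y T / (1-δ)^(n+1)) / (1-δ) :=
            (div_le_div_iff_of_pos_right (by linarith)).mpr h1
          calc y τ' ≤ y s / (1-δ) := h2
            _ ≤ (y T / (1-δ)^(n+1)) / (1-δ) := h3
            _ = y T / (1-δ)^(n+1+1) := by rw [div_div, ← pow_succ]
    -- choose n
    set n : ℕ := ⌊c/δ⌋₊ with hndef
    have hn1 : c ≤ ((n:ℝ)+1)*δ := by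
      have := Nat.lt_floor_add_one (c/δ)
      have h := (div_lt_iff₀ hδ0).mp this
      linarith
    have hn2 : (n:ℝ)*δ ≤ c := by
      have := Nat.floor_le (by positivity : (0:ℝ) ≤ c/δ)
      calc (n:ℝ)*δ ≤ (c/δ)*δ := by nlinarith
        _ = c := by field_simp
    have h1 := ind n τ hτ hn1
    -- (1-δ)⁻¹ ≤ exp((1+2δ)δ)
    have hpos : (0:ℝ) < 1 - δ := by linarith
    have hexp1 : (1-δ)⁻¹ ≤ Real.exp ((1+2*δ)*δ) := by
      have ha : (1+2*δ)*δ + 1 ≤ Real.exp ((1+2*δ)*δ) := Real.add_one_le_exp _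
      have hb2 : (1-δ)⁻¹ ≤ (1+2*δ)*δ + 1 := by
        rw [← one_div, div_le_iff₀ hpos]
        nlinarith [mul_nonneg (mul_nonneg hδ0.le hδ0.le) (by linarith : (0:ℝ) ≤ 1 - 2*δ)]
      linarith
    have hchain : y T / (1-δ)^(n+1) ≤ y T * Real.exp ((1+2*δ)*(c+δ)) := by
      rw [div_eq_mul_inv, ← inv_pow]
      apply mul_le_mul_of_nonneg_left _ hyT0
      calc ((1-δ)⁻¹)^(n+1) ≤ (Real.exp ((1+2*δ)*δ))^(n+1) :=
            pow_le_pow_left₀ (by positivity) hexp1 _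
        _ = Real.exp (((n:ℝ)+1) * ((1+2*δ)*δ)) := by
            rw [← Real.exp_nat_mul]; push_cast; ring_nf
        _ ≤ Real.exp ((1+2*δ)*(c+δ)) := by
            apply Real.exp_le_exp.mpr
            nlinarith
    linarith
  -- limit δ → 0⁺
  have hlim : Filter.Tendsto (fun δ : ℝ => y T * Real.exp ((1+2*δ)*(c+δ)))
      (nhdsWithin 0 (Set.Ioi 0)) (nhds (y T * Real.exp c)) := by
    have hcont : Continuous fun δ : ℝ => y T * Real.exp ((1+2*δ)*(c+δ)) :=
      continuous_const.mul (Real.continuous_exp.comp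
        ((continuous_const.add (continuous_const.mul continuous_id)).mul
          (continuous_const.add continuous_id)))
    have h0 := hcont.tendsto 0
    simp only [mul_zero, add_zero, one_mul, zero_add] at h0
    exact h0.mono_left nhdsWithin_le_nhds
  have hev : ∀ᶠ δ in nhdsWithin 0 (Set.Ioi 0),
      y τ ≤ y T * Real.exp ((1+2*δ)*(c+δ)) :=
    Filter.eventually_of_mem (Ioc_mem_nhdsGT_of_mem ⟨le_refl 0, by norm_num⟩) hδbound
  have := ge_of_tendsto hlim hev
  exact le_trans this (le_of_eq (mul_comm _ _))


/-- the nonlinear Gronwall estimate (C3)–(C5) in the prediction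
period: if `y' ≤ χ (y + y^{2/γ})` a.e. on `(T, T⁺)` with `1 < γ ≤ 2` and
`e^{2∫_T^{T⁺} χ} y(T) ≤ 1`, then `y(τ) ≤ e^{2∫_T^τ χ} y(T)` on `(T, T⁺]`. -/
theorem gronwall_forecast
    (T Tp γ : ℝ) (hTT : T < Tp) (hγ1 : 1 < γ) (hγ2 : γ ≤ 2)
    (y y' χ : ℝ → ℝ)
    (hynn : ∀ t ∈ Set.Icc T Tp, 0 ≤ y t)
    (hχint : IntegrableOn χ (Set.Ioc T Tp))
    (hχnn : ∀ t, 0 ≤ χ t)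
    (hy'int : IntegrableOn y' (Set.Icc T Tp))
    (hAC : ∀ t ∈ Set.Icc T Tp, y t = y T + ∫ s in T..t, y' s)
    (hineq : ∀ᵐ t ∂(volume.restrict (Set.Ioo T Tp)),
      y' t ≤ χ t * (y t + y t ^ ((2:ℝ)/γ)))
    (hsmall : Real.exp (2 * ∫ s in T..Tp, χ s) * y T ≤ 1) :
    ∀ τ ∈ Set.Ioc T Tp,
      y τ ≤ Real.exp (2 * ∫ s in T..τ, χ s) * y T := by
  have hTT' : T ≤ Tp := hTT.le
  set J : ℝ → ℝ := fun t => ∫ s in T..t, χ s with hJdef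
  -- basic integrability facts (as in aux)
  have hχicc : IntegrableOn χ (Set.Icc T Tp) :=
    (integrableOn_Icc_iff_integrableOn_Ioc).mpr hχint
  have hii : ∀ (f : ℝ → ℝ), IntegrableOn f (Set.Icc T Tp) →
      ∀ s ∈ Set.Icc T Tp, ∀ t ∈ Set.Icc T Tp, IntervalIntegrable f volume s t := by
    intro f hf s hs t ht
    rw [intervalIntegrable_iff]
    refine hf.mono_set (fun x hx => ?_)
    exact ⟨le_trans (le_min hs.1 ht.1) hx.1.le, le_trans hx.2 (max_le hs.2 ht.2)⟩
  have ycont : ContinuousOn y (Set.Icc T Tp) := by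
    have h1 : ContinuousOn (fun t => y T + ∫ s in T..t, y' s) (Set.Icc T Tp) := by
      apply ContinuousOn.add continuousOn_const
      have := intervalIntegral.continuousOn_primitive_interval (f := y') (μ := volume) (a := T) (b := Tp) ?_
      · rwa [Set.uIcc_of_le hTT'] at this
      · rwa [Set.uIcc_of_le hTT']
    exact ContinuousOn.congr h1 hAC
  have hJadd : ∀ s ∈ Set.Icc T Tp, ∀ t ∈ Set.Icc T Tp,
      J t - J s = ∫ x in s..t, χ x := by
    intro s hs t ht
    have := intervalIntegral.integral_add_adjacent_intervals
      (hii χ hχicc T ⟨le_rfl, hTT'⟩ s hs) (hii χ hχicc s hs t ht)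
    simp only [hJdef]
    linarith [this]
  have hyrep : ∀ s ∈ Set.Icc T Tp, ∀ t ∈ Set.Icc T Tp,
      y t = y s + ∫ x in s..t, y' x := by
    intro s hs t ht
    have h1 := hAC s hs
    have h2 := hAC t ht
    have := intervalIntegral.integral_add_adjacent_intervals
      (hii y' hy'int T ⟨le_rfl, hTT'⟩ s hs) (hii y' hy'int s hs t ht)
    linarith
  have hyT0 : 0 ≤ y T := hynn T ⟨le_rfl, hTT'⟩
  have hITp : 0 ≤ ∫ s in T..Tp, χ s :=
    intervalIntegral.integral_nonneg hTT' (fun u _ => hχnn u)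
  have hyT1 : y T ≤ 1 := by
    have h1 : (1:ℝ) ≤ Real.exp (2 * ∫ s in T..Tp, χ s) :=
      Real.one_le_exp (by positivity)
    nlinarith
  -- derive the linear a.e. bound on any interval where y ≤ 1
  have hle1bd : ∀ b' : ℝ, b' ≤ Tp → (∀ s ∈ Set.Icc T b', y s ≤ 1) →
      ∀ᵐ t ∂(volume.restrict (Set.Ioo T b')), y' t ≤ 2 * χ t * y t := by
    intro b' hb2 hy1
    have h0 : ∀ᵐ t ∂(volume.restrict (Set.Ioo T b')),
        y' t ≤ χ t * (y t + y t ^ ((2:ℝ)/γ)) :=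
      ae_restrict_of_ae_restrict_of_subset (Set.Ioo_subset_Ioo le_rfl hb2) hineq
    have hmem := ae_restrict_mem (μ := volume)
      (measurableSet_Ioo : MeasurableSet (Set.Ioo T b'))
    filter_upwards [h0, hmem] with t h1 h2
    have hIcc : t ∈ Set.Icc T Tp := ⟨h2.1.le, le_trans h2.2.le hb2⟩
    have hy0 : 0 ≤ y t := hynn t hIcc
    have hy1t : y t ≤ 1 := hy1 t ⟨h2.1.le, h2.2.le⟩
    have hγ0 : (0:ℝ) < γ := by linarith
    have hrp : y t ^ ((2:ℝ)/γ) ≤ y t := by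
      rcases eq_or_lt_of_le hy0 with h | h
      · rw [← h, Real.zero_rpow (by positivity : (2:ℝ)/γ ≠ 0)]
      · calc y t ^ ((2:ℝ)/γ) ≤ y t ^ (1:ℝ) :=
              Real.rpow_le_rpow_of_exponent_ge h hy1t
                (by rw [le_div_iff₀ hγ0]; linarith)
          _ = y t := Real.rpow_one _
    calc y' t ≤ χ t * (y t + y t ^ ((2:ℝ)/γ)) := h1
      _ ≤ 2 * χ t * y t := by nlinarith [hχnn t]
  -- the bootstrap set
  set S : Set ℝ := {r | r ∈ Set.Icc T Tp ∧ ∀ s ∈ Set.Icc T r, y s ≤ 1} with hSdef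
  have hTS : T ∈ S := by
    refine ⟨⟨le_rfl, hTT'⟩, fun s hs => ?_⟩
    have : s = T := le_antisymm hs.2 hs.1
    rwa [this]
  have hSne : S.Nonempty := ⟨T, hTS⟩
  have hSbdd : BddAbove S := ⟨Tp, fun r hr => hr.1.2⟩
  have hts1 : T ≤ sSup S := le_csSup hSbdd hTS
  have hts2 : sSup S ≤ Tp := csSup_le hSne (fun r hr => hr.1.2)
  have hyle1 : ∀ s ∈ Set.Icc T (sSup S), y s ≤ 1 := by
    intro s hs
    rcases lt_or_eq_of_le hs.2 with h | h
    · obtain ⟨r, hrS, hsr⟩ := exists_lt_of_lt_csSup hSne h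
      exact hrS.2 s ⟨hs.1, hsr.le⟩
    · rcases eq_or_lt_of_le hts1 with he | hlt
      · have : s = T := by rw [h, ← he]
        rw [this]; exact hyT1
      · have hcw : ContinuousWithinAt y (Set.Ico T (sSup S)) (sSup S) :=
          (ycont (sSup S) ⟨hts1, hts2⟩).mono
            (fun x hx => ⟨hx.1, le_trans hx.2.le hts2⟩)
      -- left-limit argument
        have hne : (nhdsWithin (sSup S) (Set.Ico T (sSup S))).NeBot := by
          rw [nhdsWithin_Ico_eq_nhdsLT hlt]
          exact nhdsLT_neBot _
        have hev : ∀ᶠ x in nhdsWithin (sSup S) (Set.Ico T (sSup S)), y x ≤ 1 := by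
          apply eventually_nhdsWithin_of_forall
          intro x hx
          obtain ⟨r, hrS, hxr⟩ := exists_lt_of_lt_csSup hSne hx.2
          exact hrS.2 x ⟨hx.1, hxr.le⟩
        have := le_of_tendsto hcw hev
        rwa [h]
  -- conditional Gronwall bound up to sSup S
  have hauxS : ∀ τ ∈ Set.Icc T (sSup S), y τ ≤ Real.exp (2 * J τ) * y T :=
    gronwall_forecast_aux T Tp hTT' y y' χ hynn hχint hχnn hy'int hAC
      (sSup S) hts1 hts2 (hle1bd (sSup S) hts2 hyle1)
  -- sSup S = Tp
  have htseq : sSup S = Tp := by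
    by_contra hne'
    have hlt : sSup S < Tp := lt_of_le_of_ne hts2 hne'
    rcases lt_or_eq_of_le (hyle1 (sSup S) ⟨hts1, le_rfl⟩) with hcase | hcase
    · -- y (sSup S) < 1 : push past sSup S by continuity
      have hcw : ContinuousWithinAt y (Set.Icc T Tp) (sSup S) :=
        ycont (sSup S) ⟨hts1, hts2⟩
      have hev2 : ∀ᶠ x in nhdsWithin (sSup S) (Set.Icc T Tp), y x < 1 :=
        hcw.eventually_lt_const hcase
      rw [Filter.eventually_iff, mem_nhdsWithin] at hev2
      obtain ⟨U, hUo, hUx, hUsub⟩ := hev2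
      obtain ⟨ε, hε, hball⟩ := Metric.isOpen_iff.mp hUo _ hUx
      set b' := min (sSup S + ε/2) Tp with hb'def
      have hb'1 : sSup S < b' := lt_min (by linarith) hlt
      have hb'S : b' ∈ S := by
        refine ⟨⟨le_trans hts1 hb'1.le, min_le_right _ _⟩, fun s hs => ?_⟩
        rcases le_or_gt s (sSup S) with h' | h'
        · exact hyle1 s ⟨hs.1, h'⟩
        · apply le_of_lt
          apply hUsub
          constructor
          · apply hball
            rw [Metric.mem_ball, Real.dist_eq, abs_of_pos (by linarith)]
            have : s ≤ sSup S + ε/2 := le_trans hs.2 (min_le_left _ _)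
            linarith
          · exact ⟨hs.1, le_trans hs.2 (min_le_right _ _)⟩
      exact absurd (le_csSup hSbdd hb'S) (not_le.mpr hb'1)
    · -- y (sSup S) = 1 : χ vanishes a.e. beyond sSup S
      have h1 := hauxS (sSup S) ⟨hts1, le_rfl⟩
      have htsIcc : sSup S ∈ Set.Icc T Tp := ⟨hts1, hts2⟩
      have hsplit := hJadd (sSup S) htsIcc Tp ⟨hTT', le_rfl⟩
      have hIrest : 0 ≤ ∫ x in (sSup S)..Tp, χ x :=
        intervalIntegral.integral_nonneg hts2 (fun u _ => hχnn u)
      have hJTpval : J Tp = ∫ s in T..Tp, χ s := rfl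
      have hmono' : Real.exp (2 * J (sSup S)) * y T ≤ Real.exp (2 * J Tp) * y T := by
        apply mul_le_mul_of_nonneg_right _ hyT0
        apply Real.exp_le_exp.mpr
        linarith
      have h2 : Real.exp (2 * J (sSup S)) * y T ≤ 1 := le_trans hmono' (by rw [hJTpval] at *; exact hsmall)
      have h3 : Real.exp (2 * J (sSup S)) * y T = 1 := le_antisymm h2 (by rw [← hcase]; exact h1)
      have hyTpos : 0 < y T := by
        rcases lt_or_eq_of_le hyT0 with h | h
        · exact h
        · exfalso; rw [← h, mul_zero] at h3; norm_num at h3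
      have h4 : Real.exp (2 * J Tp) * y T = 1 :=
        le_antisymm (by rw [hJTpval] at *; exact hsmall) (by rw [← h3]; exact hmono')
      have h5 : Real.exp (2 * J (sSup S)) = Real.exp (2 * J Tp) := by
        field_simp at h3 h4
        nlinarith [Real.exp_pos (2 * J (sSup S)), Real.exp_pos (2 * J Tp)]
      have h6 : J (sSup S) = J Tp := by
        have := Real.exp_injective h5
        linarith
      have hIzero : ∫ x in (sSup S)..Tp, χ x = 0 := by linarith
      -- χ = 0 a.e. on Ioc (sSup S) Tp
      have hχrest : IntegrableOn χ (Set.Ioc (sSup S) Tp) :=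
        hχint.mono_set (Set.Ioc_subset_Ioc_left hts1)
      have hz : ∀ᵐ x ∂(volume.restrict (Set.Ioc (sSup S) Tp)), χ x = 0 := by
        have hI2 : ∫ x in Set.Ioc (sSup S) Tp, χ x = 0 := by
          rw [← intervalIntegral.integral_of_le hlt.le]; exact hIzero
        have := (integral_eq_zero_iff_of_nonneg (fun x => hχnn x) hχrest).mp hI2
        filter_upwards [this] with x hx using hx
      have hz' : ∀ᵐ x ∂(volume.restrict (Set.Ioo (sSup S) Tp)), χ x = 0 :=
        ae_restrict_of_ae_restrict_of_subset Set.Ioo_subset_Ioc_self hz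
      have hineq' : ∀ᵐ t ∂(volume.restrict (Set.Ioo (sSup S) Tp)),
          y' t ≤ χ t * (y t + y t ^ ((2:ℝ)/γ)) :=
        ae_restrict_of_ae_restrict_of_subset (Set.Ioo_subset_Ioo hts1 le_rfl) hineq
      have hy'neg : ∀ᵐ t ∂(volume.restrict (Set.Ioo (sSup S) Tp)), y' t ≤ 0 := by
        filter_upwards [hz', hineq'] with t h1' h2'
        rw [h1'] at h2'; simpa using h2'
      -- y nonincreasing past sSup S, hence Tp ∈ S
      have hTpS : Tp ∈ S := by
        refine ⟨⟨hTT', le_rfl⟩, fun s hs => ?_⟩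
        rcases le_or_gt s (sSup S) with h' | h'
        · exact hyle1 s ⟨hs.1, h'⟩
        · have hsIcc : s ∈ Set.Icc T Tp := hs
          have hrep := hyrep (sSup S) htsIcc s hsIcc
          have hint1 : IntervalIntegrable y' volume (sSup S) s :=
            hii y' hy'int (sSup S) htsIcc s hsIcc
          have hint2 : IntervalIntegrable (fun _ => (0:ℝ)) volume (sSup S) s :=
            intervalIntegrable_const
          have hae : y' ≤ᵐ[volume.restrict (Set.Icc (sSup S) s)] fun _ => (0:ℝ) := by
            have hcongr : volume.restrict (Set.Icc (sSup S) s)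
                = volume.restrict (Set.Ioo (sSup S) s) :=
              (Measure.restrict_congr_set (Ioo_ae_eq_Icc)).symm
            rw [hcongr]
            exact ae_restrict_of_ae_restrict_of_subset
              (Set.Ioo_subset_Ioo le_rfl hs.2) hy'neg
          have hIle := intervalIntegral.integral_mono_ae_restrict h'.le hint1 hint2 hae
          rw [intervalIntegral.integral_const, smul_zero] at hIle
          have := hyle1 (sSup S) ⟨hts1, le_rfl⟩
          linarith [hrep]
      exact absurd (le_csSup hSbdd hTpS) (not_le.mpr hlt)
  -- conclude
  intro τ hτ
  have hτIcc : τ ∈ Set.Icc T (sSup S) := ⟨hτ.1.le, by rw [htseq]; exact hτ.2⟩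
  exact hauxS τ hτIcc
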